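/- Fix integers i_0 < i_1 < ⋯ < i_{n−1} and define the n×n Schur determinant S_{i_{n−1}−(n−1),…,i_0}(t) = det(S_{i_{n−k}−(n−k)+l−k}(t))_{1≤k,l≤n}. Then Σ_{l=1}^{n} S_{i_{n−1}−(n−1),…,i_{n−l}−(n−l)−1,…,i_0}(t) equals the determinant of the n×n matrix whose (k,l) entry is S_{i_{n−k}−n+l−k+1}(t) for l ≥ 2 and S_{i_{n−k}−n−k+1}(t) for l = 1 — i.e., the determinant obtained from the original matrix by shifting only the first column index down by 1. In other words, the sum of the n determinants in which one row's index is decreased by 1 collapses to a single determinant. -/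

import Mathlib

open MvPolynomial Finset

noncomputable def elemSchur (n : ℤ) : MvPolynomial ℕ ℂ :=
  if 0 ≤ n then
    ∑ m ∈ Finset.range (n.toNat + 1), (m.factorial : ℂ)⁻¹ •
      (PowerSeries.coeff (R := MvPolynomial ℕ ℂ) n.toNat
        ((∑ k ∈ Finset.range (n.toNat + 1),
            PowerSeries.C (R := MvPolynomial ℕ ℂ) (X k) * PowerSeries.X ^ (k + 1)) ^ m))
  else 0

open Matrix Equiv in
lemma sum_det_updateRow_eq_sum_det_updateCol {R : Type*} [CommRing R] {n : ℕ}
    (M N : Matrix (Fin n) (Fin n) R) :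
    ∑ r, (M.updateRow r (N r)).det = ∑ c, (M.updateCol c (fun k => N k c)).det := by
  have hrow : ∀ (σ : Equiv.Perm (Fin n)) (r : Fin n),
      (∏ i, (M.updateRow r (N r)) (σ i) i)
        = N r (σ.symm r) * ∏ i ∈ Finset.univ.erase (σ.symm r), M (σ i) i := by
    intro σ r
    rw [← Finset.mul_prod_erase Finset.univ _ (Finset.mem_univ (σ.symm r))]
    congr 1
    · rw [updateRow_apply, if_pos (σ.apply_symm_apply r)]
    · refine Finset.prod_congr rfl fun j hj => ?_
      rw [updateRow_apply, if_neg]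
      intro h
      exact (Finset.mem_erase.mp hj).1 (by rw [← h, Equiv.symm_apply_apply])
  have hcol : ∀ (σ : Equiv.Perm (Fin n)) (c : Fin n),
      (∏ i, (M.updateCol c (fun k => N k c)) (σ i) i)
        = N (σ c) c * ∏ i ∈ Finset.univ.erase c, M (σ i) i := by
    intro σ c
    rw [← Finset.mul_prod_erase Finset.univ _ (Finset.mem_univ c)]
    congr 1
    · rw [updateCol_apply, if_pos rfl]
    · refine Finset.prod_congr rfl fun j hj => ?_
      rw [updateCol_apply, if_neg (Finset.mem_erase.mp hj).1]
  simp only [det_apply']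
  rw [Finset.sum_comm]
  conv_rhs => rw [Finset.sum_comm]
  refine Finset.sum_congr rfl fun σ _ => ?_
  have := Equiv.sum_comp σ
    (fun r => Equiv.Perm.sign σ * (N r (σ.symm r) * ∏ i ∈ Finset.univ.erase (σ.symm r), M (σ i) i) : Fin n → R)
  simp only [hrow, hcol]
  rw [← this]
  refine Finset.sum_congr rfl fun c _ => ?_
  rw [Equiv.symm_apply_apply]

open Matrix in
theorem sum_schur_det_row_shift {n : ℕ} (hn : 1 ≤ n) (i : Fin n → ℤ)
    (hi : StrictMono i) :
    ∑ m : Fin n,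
        (Matrix.of fun k l : Fin n =>
          elemSchur (Function.update i m (i m - 1) k.rev - (k.rev : ℤ) + l - k)).det
      = (Matrix.of fun k l : Fin n =>
          elemSchur (i k.rev - (k.rev : ℤ) + l - k - if (l : ℕ) = 0 then 1 else 0)).det := by
  classical
  set M : Matrix (Fin n) (Fin n) (MvPolynomial ℕ ℂ) :=
    Matrix.of fun k l : Fin n => elemSchur (i k.rev - (k.rev : ℤ) + l - k) with hM
  set N : Matrix (Fin n) (Fin n) (MvPolynomial ℕ ℂ) :=
    Matrix.of fun k l : Fin n => elemSchur (i k.rev - (k.rev : ℤ) + l - k - 1) with hN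
  have h1 : ∀ m : Fin n,
      (Matrix.of fun k l : Fin n =>
        elemSchur (Function.update i m (i m - 1) k.rev - (k.rev : ℤ) + l - k))
        = M.updateRow m.rev (N m.rev) := by
    intro m
    ext k l
    by_cases hk : k = m.rev
    · subst hk
      rw [Matrix.updateRow_self]
      have hu : Function.update i m (i m - 1) m.rev.rev = i m - 1 := by
        rw [Fin.rev_rev, Function.update_self]
      simp only [Matrix.of_apply, hN, hu, Fin.rev_rev, Function.update_self]
      congr 1
      ring
    · rw [Matrix.updateRow_ne hk]
      simp only [Matrix.of_apply, hM]
      rw [Function.update_of_ne (fun h => hk (by rw [← h, Fin.rev_rev]))]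
  rw [Finset.sum_congr rfl fun m _ => congrArg Matrix.det (h1 m)]
  have hre := Equiv.sum_comp Fin.revPerm (fun r => (M.updateRow r (N r)).det)
  simp only [Fin.revPerm_apply] at hre
  rw [hre]
  rw [sum_det_updateRow_eq_sum_det_updateCol M N]
  set z : Fin n := ⟨0, hn⟩ with hz
  rw [Finset.sum_eq_single_of_mem z (Finset.mem_univ z)]
  · congr 1
    ext k l
    rw [Matrix.updateCol_apply]
    by_cases hl : l = z
    · subst hl
      rw [if_pos rfl]
      simp [hN, hz]
    · rw [if_neg hl]
      have : ((l : ℕ) = 0) = False := by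
        simp only [eq_iff_iff, iff_false]
        exact fun h => hl (Fin.ext (by simpa [hz] using h))
      simp only [Matrix.of_apply, hM, this, if_false]
      congr 1
      ring
  · intro c _ hc
    have hcn : (c : ℕ) ≠ 0 := fun h => hc (Fin.ext (by simpa using h))
    have hlt : (c : ℕ) - 1 < n := by omega
    set c' : Fin n := ⟨(c : ℕ) - 1, hlt⟩ with hc'
    apply Matrix.det_zero_of_column_eq (i := c') (j := c)
    · intro h
      apply hcn
      have := congrArg Fin.val h
      simp only [hc'] at this
      omega
    · intro k
      rw [Matrix.updateCol_apply, Matrix.updateCol_apply, if_pos rfl,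
        if_neg (fun h : c' = c => hcn (by have := congrArg Fin.val h; simp [hc'] at this; omega))]
      simp only [Matrix.of_apply, hM, hN]
      congr 1
      have : (c' : ℤ) = (c : ℤ) - 1 := by
        simp only [hc']
        omega
      rw [this]; ring
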